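/- Let a > 0 and b ≥ 0 be real constants and let u : [0,∞) → ℝ be differentiable with u'(t) ≤ −a·u(t)² + 2b·u(t) + 2 for all t ≥ 0. Let x₊ := (b + √(b² + 2a))/a denote the larger root of the quadratic −a x² + 2b x + 2. Then for every t > 0 one has u(t) ≤ x₊ + 1/(a t). -/

import Mathlib

/-- Key pointwise inequality: if `U ≥ x + p` with `p > 0`, where `x` is the larger
root of the quadratic, then `-a U² + 2b U + 2 ≤ -a p²`. -/
lemma riccati_key_ineq (a b s x U p : ℝ) (ha : 0 < a) (hs : 0 < s)
    (hs2 : s ^ 2 = b ^ 2 + 2 * a) (hax : a * x = b + s) (hp : 0 < p)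
    (hU : x + p ≤ U) : -a * U ^ 2 + 2 * b * U + 2 + a * p ^ 2 ≤ 0 := by
  have hroot : -a * x ^ 2 + 2 * b * x + 2 = 0 := by
    have h : a * (-a * x ^ 2 + 2 * b * x + 2) = 0 := by nlinarith [hax, hs2]
    have := mul_eq_zero.mp h
    rcases this with h' | h'
    · exact absurd h' (ne_of_gt ha)
    · exact h'
  have h1 : 0 ≤ U - x - p := by linarith
  have h2 : 0 < U - x := by linarith
  nlinarith [mul_nonneg h1 (by linarith : (0:ℝ) ≤ U - x + p), mul_pos hs h2,
    mul_nonneg (le_of_lt ha) (mul_nonneg h1 (by linarith : (0:ℝ) ≤ U - x + p))]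

/-- Scalar Riccati comparison estimate: solutions of `u' ≤ -a u² + 2b u + 2` are,
for positive times, bounded by the larger root `x₊ = (b + √(b² + 2a))/a` of the
quadratic plus `1/(a t)`. -/
theorem riccati_comparison_larger_root
    (a b : ℝ) (ha : 0 < a) (hb : 0 ≤ b) (u : ℝ → ℝ)
    (hdiff : ∀ t, 0 ≤ t → DifferentiableAt ℝ u t)
    (hineq : ∀ t, 0 ≤ t → deriv u t ≤ -a * (u t) ^ 2 + 2 * b * u t + 2) :
    ∀ t, 0 < t → u t ≤ (b + Real.sqrt (b ^ 2 + 2 * a)) / a + 1 / (a * t) := by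
  intro t ht
  by_contra hcon
  push_neg at hcon
  set s : ℝ := Real.sqrt (b ^ 2 + 2 * a) with hs_def
  have hs2 : s ^ 2 = b ^ 2 + 2 * a := Real.sq_sqrt (by positivity)
  have hspos : 0 < s := Real.sqrt_pos.mpr (by positivity)
  set x : ℝ := (b + s) / a with hx_def
  have hax : a * x = b + s := by rw [hx_def]; field_simp
  set v : ℝ → ℝ := fun r => x + 1 / (a * r) with hv_def
  have hvt : v t < u t := hcon
  -- v is differentiable at positive points with the expected derivative
  have hvderiv : ∀ r : ℝ, 0 < r → HasDerivAt v (-a / (a * r) ^ 2) r := by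
    intro r hr
    have h1 : HasDerivAt (fun r : ℝ => a * r) a r := by
      simpa using (hasDerivAt_id r).const_mul a
    have h2 : HasDerivAt (fun r : ℝ => (a * r)⁻¹) (-a / (a * r) ^ 2) r :=
      h1.inv (by positivity)
    have h3 := h2.const_add x
    simpa [hv_def, one_div] using h3
  -- continuity facts
  have hucont : ∀ r : ℝ, 0 ≤ r → ContinuousAt u r := fun r hr => (hdiff r hr).continuousAt
  have hvcont : ∀ r : ℝ, 0 < r → ContinuousAt v r := fun r hr => (hvderiv r hr).continuousAt
  -- find a small ε with u ε ≤ v ε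
  have hcompact : IsCompact (Set.Icc (0:ℝ) t) := isCompact_Icc
  have huc : ContinuousOn u (Set.Icc 0 t) := fun r hr => (hucont r hr.1).continuousWithinAt
  obtain ⟨C, hC⟩ : ∃ C, ∀ r ∈ Set.Icc (0:ℝ) t, u r ≤ C := by
    obtain ⟨C, hC⟩ := hcompact.exists_bound_of_continuousOn huc
    exact ⟨C, fun r hr => (le_abs_self _).trans ((abs_le.mp (by simpa using hC r hr)).2.trans le_rfl)⟩
  set C' : ℝ := max C x + 1 with hC'_def
  have hC'x : x < C' := lt_of_le_of_lt (le_max_right C x) (by simp [hC'_def])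
  have hC'C : C ≤ C' - 1 := by simp [hC'_def]
  have hCx : 0 < C' - x := by linarith
  set ε : ℝ := min t (1 / (a * (C' - x))) with hε_def
  have hε0 : 0 < ε := lt_min ht (div_pos one_pos (mul_pos ha hCx))
  have hεt : ε ≤ t := min_le_left _ _
  have hεv : u ε ≤ v ε := by
    have h1 : u ε ≤ C := hC ε ⟨le_of_lt hε0, hεt⟩
    have h2 : ε ≤ 1 / (a * (C' - x)) := min_le_right _ _
    have h4 : a * (C' - x) * ε ≤ 1 := by
      have h5 := mul_le_mul_of_nonneg_left h2 (le_of_lt (mul_pos ha hCx))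
      rwa [mul_one_div_cancel (ne_of_gt (mul_pos ha hCx))] at h5
    have h3 : C' - x ≤ 1 / (a * ε) := by
      rw [le_div_iff₀ (by positivity)]
      nlinarith
    have : C' ≤ v ε := by simp only [hv_def]; linarith
    linarith
  -- the set of crossing points
  set S : Set ℝ := {r ∈ Set.Icc ε t | u r ≤ v r} with hS_def
  have hScl : IsClosed S := by
    have hwc : ContinuousOn (fun r => u r - v r) (Set.Icc ε t) := fun r hr =>
      ((hucont r (le_trans (le_of_lt hε0) hr.1)).sub
        (hvcont r (lt_of_lt_of_le hε0 hr.1))).continuousWithinAt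
    have : S = Set.Icc ε t ∩ (fun r => u r - v r) ⁻¹' Set.Iic 0 := by
      ext r; simp only [hS_def, Set.mem_setOf_eq, Set.mem_inter_iff, Set.mem_preimage,
        Set.mem_Iic, sub_nonpos]
    rw [this]
    exact hwc.preimage_isClosed_of_isClosed isClosed_Icc isClosed_Iic
  have hSne : S.Nonempty := ⟨ε, ⟨le_rfl, hεt⟩, hεv⟩
  have hSbdd : BddAbove S := ⟨t, fun r hr => hr.1.2⟩
  set s₀ : ℝ := sSup S with hs₀_def
  have hs₀S : s₀ ∈ S := hScl.csSup_mem hSne hSbdd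
  have hs₀pos : 0 < s₀ := lt_of_lt_of_le hε0 hs₀S.1.1
  have hs₀t : s₀ < t := by
    rcases lt_or_eq_of_le hs₀S.1.2 with h | h
    · exact h
    · exact absurd (h ▸ hs₀S.2) (not_le.mpr hvt)
  -- for r in (s₀, t], v r < u r
  have hgt : ∀ r, s₀ < r → r ≤ t → v r < u r := by
    intro r hr1 hr2
    by_contra h
    push_neg at h
    have : r ∈ S := ⟨⟨le_trans hs₀S.1.1 (le_of_lt hr1), hr2⟩, h⟩
    exact absurd (le_csSup hSbdd this) (not_le.mpr hr1)
  -- w = u - v is antitone on [s₀, t]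
  set w : ℝ → ℝ := fun r => u r - v r with hw_def
  have hanti : AntitoneOn w (Set.Icc s₀ t) := by
    apply antitoneOn_of_deriv_nonpos (convex_Icc s₀ t)
    · intro r hr
      exact ((hucont r (le_trans (le_of_lt hs₀pos) hr.1)).sub
        (hvcont r (lt_of_lt_of_le hs₀pos hr.1))).continuousWithinAt
    · intro r hr
      rw [interior_Icc] at hr
      have hr0 : 0 < r := lt_trans hs₀pos hr.1
      exact (((hdiff r (le_of_lt hr0)).sub (hvderiv r hr0).differentiableAt)).differentiableWithinAt
    · intro r hr
      rw [interior_Icc] at hr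
      have hr0 : 0 < r := lt_trans hs₀pos hr.1
      have hdw : deriv w r = deriv u r - (-a / (a * r) ^ 2) := by
        rw [hw_def]
        rw [deriv_fun_sub (hdiff r (le_of_lt hr0)) (hvderiv r hr0).differentiableAt,
          (hvderiv r hr0).deriv]
      rw [hdw]
      have h1 := hineq r (le_of_lt hr0)
      have h2 : v r < u r := hgt r hr.1 (le_of_lt hr.2)
      have hp : (0:ℝ) < 1 / (a * r) := by positivity
      have hkey := riccati_key_ineq a b s x (u r) (1 / (a * r)) ha hspos hs2 hax hp
        (by simpa [hv_def] using h2.le)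
      have heq : a * (1 / (a * r)) ^ 2 = a / (a * r) ^ 2 := by field_simp
      have hkey' : -a * u r ^ 2 + 2 * b * u r + 2 + a / (a * r) ^ 2 ≤ 0 := by
        rw [← heq]; exact hkey
      have hneg : -a / (a * r) ^ 2 = -(a / (a * r) ^ 2) := by ring
      rw [hneg]
      linarith
  -- derive the contradiction
  have h1 : w t ≤ w s₀ := hanti ⟨le_rfl, le_of_lt hs₀t⟩ ⟨le_of_lt hs₀t, le_rfl⟩ (le_of_lt hs₀t)
  have h2 : w s₀ ≤ 0 := by simp only [hw_def]; linarith [hs₀S.2]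
  have h3 : 0 < w t := by simp only [hw_def]; linarith
  linarith
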